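/- For every fixed integer h ≥ 1, there exists a natural number M such that for all m ≥ M, 2^m · γ(h, m) ≤ binom(2^m, h); equivalently, for n = 2^m sufficiently large, the bound γ(h, log₂ n)/binom(n, h) ≤ 1/n holds, so the Iterated Swap Tree's soundness lower bound 1 − γ(h, log₂ n)/binom(n, h) is at least the optimal value 1 − 1/n. -/

import Mathlib

/-- The recursively defined quantity `γ(h, m)` bounding the soundness of the
Iterated Swap Tree: `γ(0,m) = γ(1,m) = 1`, `γ(h,0) = 0` for `h ≥ 2`, and
`γ(h, m) = ∑_{k=0}^{⌊h/2⌋} γ(k, m-1) γ(h-k, m-1)` for `h ≥ 2`, `m ≥ 1`. -/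
def gamma : ℕ → ℕ → ℚ
  | 0, _ => 1
  | 1, _ => 1
  | _ + 2, 0 => 0
  | h + 2, m + 1 => ∑ k ∈ Finset.range ((h + 2) / 2 + 1), gamma k m * gamma (h + 2 - k) m
  termination_by h m => m

lemma gamma_zero (m : ℕ) : gamma 0 m = 1 := by rw [gamma]
lemma gamma_one (m : ℕ) : gamma 1 m = 1 := by rw [gamma]
lemma gamma_two_zero (h : ℕ) : gamma (h + 2) 0 = 0 := by rw [gamma]
lemma gamma_succ (h m : ℕ) :
    gamma (h + 2) (m + 1) =
      ∑ k ∈ Finset.range ((h + 2) / 2 + 1), gamma k m * gamma (h + 2 - k) m := by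
  rw [gamma]

lemma gamma_nonneg : ∀ (m h : ℕ), 0 ≤ gamma h m := by
  intro m
  induction m with
  | zero =>
    intro h
    match h with
    | 0 => rw [gamma_zero]; norm_num
    | 1 => rw [gamma_one]; norm_num
    | h + 2 => rw [gamma_two_zero]
  | succ m ih =>
    intro h
    match h with
    | 0 => rw [gamma_zero]; norm_num
    | 1 => rw [gamma_one]; norm_num
    | h + 2 =>
      rw [gamma_succ]
      exact Finset.sum_nonneg fun k _ => mul_nonneg (ih k) (ih _)

lemma bern (j : ℕ) (x : ℚ) (hx : 0 ≤ x) :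
    x ^ (j + 1) + (j + 1) * x ^ j ≤ (x + 1) ^ (j + 1) := by
  induction j with
  | zero => norm_num
  | succ j ih =>
    have h1 : (x ^ (j + 1) + (j + 1) * x ^ j) * (x + 1) ≤ (x + 1) ^ (j + 1) * (x + 1) :=
      mul_le_mul_of_nonneg_right ih (by linarith)
    have h2 : 0 ≤ x ^ j := pow_nonneg hx j
    have e1 : x ^ (j + 1 + 1) = x ^ j * x * x := by ring
    have e2 : x ^ (j + 1) = x ^ j * x := by ring
    have e3 : (x + 1) ^ (j + 1 + 1) = (x + 1) ^ (j + 1) * (x + 1) := by ring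
    rw [e1, e3]
    rw [e2] at h1 ⊢
    push_cast
    nlinarith [h1, h2, hx]

lemma gamma_le : ∀ (m h : ℕ), 1 ≤ h → gamma h m ≤ 4 ^ h * (m : ℚ) ^ (h - 1) := by
  intro m
  induction m with
  | zero =>
    intro h hh
    match h, hh with
    | 1, _ => rw [gamma_one]; norm_num
    | h + 2, _ =>
      rw [gamma_two_zero]
      have : ((h : ℕ) + 2) - 1 = h + 1 := by omega
      rw [this]
      simp
  | succ m ih =>
    intro h hh
    match h, hh with
    | 1, _ => rw [gamma_one]; norm_num
    | h + 2, _ =>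
      rw [gamma_succ, Finset.sum_range_succ']
      have e1 : (h : ℕ) + 2 - 1 = h + 1 := by omega
      rw [e1]
      -- first summand: the shifted sum over k = i+1, 1 ≤ k ≤ (h+2)/2
      have hterm : ∀ i ∈ Finset.range ((h + 2) / 2),
          gamma (i + 1) m * gamma (h + 2 - (i + 1)) m ≤ 4 ^ (h + 2) * (m : ℚ) ^ h := by
        intro i hi
        rw [Finset.mem_range] at hi
        have hi' : i + 1 ≤ (h + 2) / 2 := hi
        have h1 : gamma (i + 1) m ≤ 4 ^ (i + 1) * (m : ℚ) ^ i := by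
          have := ih (i + 1) (by omega)
          simpa using this
        have hle : h + 2 - (i + 1) = h + 1 - i := by omega
        have h2 : gamma (h + 2 - (i + 1)) m ≤ 4 ^ (h + 1 - i) * (m : ℚ) ^ (h - i) := by
          rw [hle]
          have := ih (h + 1 - i) (by omega)
          have e2 : h + 1 - i - 1 = h - i := by omega
          rwa [e2] at this
        have hm0 : (0 : ℚ) ≤ (m : ℚ) := by positivity
        calc gamma (i + 1) m * gamma (h + 2 - (i + 1)) m
            ≤ (4 ^ (i + 1) * (m : ℚ) ^ i) * (4 ^ (h + 1 - i) * (m : ℚ) ^ (h - i)) := by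
              apply mul_le_mul h1 h2 (gamma_nonneg m _) (by positivity)
          _ = 4 ^ ((i + 1) + (h + 1 - i)) * (m : ℚ) ^ (i + (h - i)) := by
              rw [pow_add, pow_add]; ring
          _ = 4 ^ (h + 2) * (m : ℚ) ^ h := by
              have e3 : (i + 1) + (h + 1 - i) = h + 2 := by omega
              have e4 : i + (h - i) = h := by omega
              rw [e3, e4]
      have hsum : ∑ i ∈ Finset.range ((h + 2) / 2),
          gamma (i + 1) m * gamma (h + 2 - (i + 1)) m ≤
          ((h + 2) / 2 : ℕ) * (4 ^ (h + 2) * (m : ℚ) ^ h) := by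
        calc ∑ i ∈ Finset.range ((h + 2) / 2), gamma (i + 1) m * gamma (h + 2 - (i + 1)) m
            ≤ ∑ i ∈ Finset.range ((h + 2) / 2), 4 ^ (h + 2) * (m : ℚ) ^ h :=
              Finset.sum_le_sum hterm
          _ = ((h + 2) / 2 : ℕ) * (4 ^ (h + 2) * (m : ℚ) ^ h) := by
              rw [Finset.sum_const, Finset.card_range, nsmul_eq_mul]
      have hlast : gamma 0 m * gamma (h + 2 - 0) m ≤ 4 ^ (h + 2) * (m : ℚ) ^ (h + 1) := by
        rw [gamma_zero, one_mul]
        have := ih (h + 2) (by omega)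
        rwa [e1] at this
      have hcoef : (((h + 2) / 2 : ℕ) : ℚ) ≤ ((h : ℚ) + 1) := by
        have : (h + 2) / 2 ≤ h + 1 := by omega
        exact_mod_cast this
      have hb := bern h (m : ℚ) (by positivity)
      have hm0 : (0 : ℚ) ≤ (m : ℚ) ^ h := by positivity
      have hpow : (0 : ℚ) < 4 ^ (h + 2) := by positivity
      push_cast
      push_cast at hsum hlast hb hcoef
      nlinarith [mul_le_mul_of_nonneg_left hb (le_of_lt hpow),
        mul_le_mul_of_nonneg_right hcoef (mul_nonneg (le_of_lt hpow) hm0)]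

lemma sq_le_four_two_pow : ∀ m : ℕ, m ^ 2 ≤ 4 * 2 ^ m := by
  intro m
  induction m with
  | zero => norm_num
  | succ m ih =>
    have := Nat.lt_two_pow_self (n := m)
    have e : (m + 1) ^ 2 = m ^ 2 + 2 * m + 1 := by ring
    have e2 : 4 * 2 ^ (m + 1) = 4 * 2 ^ m + 4 * 2 ^ m := by ring
    omega

/-- For every fixed `h ≥ 1` there is `M` such that for all `m ≥ M`
(i.e. for `n = 2^m` sufficiently large), `γ(h, log₂ n)/binom(n, h) ≤ 1/n`, i.e.
`n · γ(h, m) ≤ binom(n, h)`: the Iterated Swap Tree achieves optimal soundness `≥ 1 - 1/n`. -/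
theorem gamma_eventually_optimal (h : ℕ) (hh : 1 ≤ h) :
    ∃ M : ℕ, ∀ m : ℕ, M ≤ m →
      (2 ^ m : ℚ) * gamma h m ≤ ((2 ^ m).choose h : ℚ) := by
  match h, hh with
  | 1, _ =>
    refine ⟨0, fun m _ => ?_⟩
    rw [gamma_one, Nat.choose_one_right, mul_one]
    push_cast
    exact le_rfl
  | h + 2, _ =>
    set H := h + 2 with hH
    set D : ℕ := 2 * (Nat.factorial H) * 4 ^ H with hD
    have hD1 : 1 ≤ D := Nat.one_le_iff_ne_zero.2 (by positivity)
    refine ⟨max H (8 * D), fun m hm => ?_⟩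
    have hmH : H ≤ m := le_trans (le_max_left _ _) hm
    have hmD : 8 * D ≤ m := le_trans (le_max_right _ _) hm
    have hm1 : 1 ≤ m := by omega
    -- Step 1: gamma bound
    have hg : gamma H m ≤ 4 ^ H * (m : ℚ) ^ (H - 1) :=
      gamma_le m H (by omega)
    -- the key natural-number inequality
    have key : (Nat.factorial H) * (2 ^ m * 4 ^ H * m ^ (H - 1)) ≤ (2 ^ m + 1 - H) ^ H := by
      set e := m - 1 with he
      have hme : m = e + 1 := by omega
      have hHe : H ≤ 2 ^ e := by
        have t1 : h + 1 < 2 ^ (h + 1) := Nat.lt_two_pow_self (n := h + 1)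
        have t2 : 2 ^ (h + 1) ≤ 2 ^ e := Nat.pow_le_pow_right (by norm_num) (by omega)
        calc H = h + 2 := hH
          _ ≤ 2 ^ (h + 1) := t1
          _ ≤ 2 ^ e := t2
      have hsub : 2 ^ e ≤ 2 ^ m + 1 - H := by
        have h2m : 2 ^ m = 2 * 2 ^ e := by rw [hme, pow_succ]; ring
        omega
      have hDm : D * m ≤ 2 ^ e := by
        have hsq := sq_le_four_two_pow m
        have h1 : 8 * D * m ≤ m * m := Nat.mul_le_mul_right m hmD
        have h2m : 2 ^ m = 2 * 2 ^ e := by rw [hme, pow_succ]; ring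
        nlinarith
      calc (Nat.factorial H) * (2 ^ m * 4 ^ H * m ^ (H - 1))
          = 2 ^ e * (D * m ^ (H - 1)) := by
            rw [hme, pow_succ]
            rw [hD]
            ring
        _ ≤ 2 ^ e * ((D * m) ^ (H - 1)) := by
            apply Nat.mul_le_mul_left
            calc D * m ^ (H - 1) ≤ D ^ (H - 1) * m ^ (H - 1) := by
                  apply Nat.mul_le_mul_right
                  exact Nat.le_self_pow (by omega) D
              _ = (D * m) ^ (H - 1) := (mul_pow D m (H - 1)).symm
        _ ≤ 2 ^ e * (2 ^ e) ^ (H - 1) := by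
            apply Nat.mul_le_mul_left
            exact Nat.pow_le_pow_left hDm (H - 1)
        _ = (2 ^ e) ^ H := by
            have hH1 : H - 1 + 1 = H := by omega
            rw [← hH1, pow_succ']
            simp
        _ ≤ (2 ^ m + 1 - H) ^ H := Nat.pow_le_pow_left hsub H
    -- assemble in ℚ
    have hc : ((2 ^ m + 1 - H : ℕ) ^ H : ℚ) / (Nat.factorial H) ≤ ((2 ^ m).choose H : ℚ) :=
      Nat.pow_le_choose H (2 ^ m)
    have hfac : (0 : ℚ) < ((Nat.factorial H) : ℚ) := by positivity
    have keyQ : ((Nat.factorial H) : ℚ) * (2 ^ m * 4 ^ H * (m : ℚ) ^ (H - 1)) ≤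
        ((2 ^ m + 1 - H : ℕ) ^ H : ℚ) := by
      exact_mod_cast key
    have step2 : (2 ^ m : ℚ) * (4 ^ H * (m : ℚ) ^ (H - 1)) ≤
        ((2 ^ m + 1 - H : ℕ) ^ H : ℚ) / (Nat.factorial H) := by
      rw [le_div_iff₀ hfac]
      calc (2 ^ m : ℚ) * (4 ^ H * (m : ℚ) ^ (H - 1)) * (Nat.factorial H)
          = ((Nat.factorial H) : ℚ) * (2 ^ m * 4 ^ H * (m : ℚ) ^ (H - 1)) := by ring
        _ ≤ _ := keyQ
    have step1 : (2 ^ m : ℚ) * gamma H m ≤ (2 ^ m : ℚ) * (4 ^ H * (m : ℚ) ^ (H - 1)) :=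
      mul_le_mul_of_nonneg_left hg (by positivity)
    exact le_trans (le_trans step1 step2) hc
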